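/- arXiv:2505.09237 — 3 statements merged into one kernel-verified Lean document; each statement's English description precedes it below -/
import Mathlib

section
/- Let (A,G,α) be a C*-dynamical system with S_G(A) nonempty. If φ ∈ S_G(A) is not an extreme point of S_G(A), then there exists a nonzero vector ξ in H_φ⁰ (the orthogonal complement of ℂξ_φ in H_φ) such that u_φ(g)ξ = ξ for every g ∈ G. -/
open Filter Topology ComplexOrder

noncomputable section

/-- A (continuous) positive definite function on a group. -/
def IsPosDefFn {G : Type*} [Group G] (f : G → ℂ) : Prop :=
  ∀ (n : ℕ) (g : Fin n → G) (c : Fin n → ℂ),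
    0 ≤ ∑ i, ∑ j, (starRingEnd ℂ) (c i) * c j * f ((g i)⁻¹ * g j)

/-- The Haagerup property for a topological group: a sequence of continuous, normalized
positive definite functions vanishing at infinity converging to `1` uniformly on
compact subsets. -/
def HasHaagerupProperty (G : Type*) [Group G] [TopologicalSpace G] : Prop :=
  ∃ φ : ℕ → G → ℂ,
    (∀ n, Continuous (φ n) ∧ IsPosDefFn (φ n) ∧ φ n 1 = 1 ∧
      Tendsto (φ n) (cocompact G) (𝓝 0)) ∧
    ∀ K : Set G, IsCompact K → TendstoUniformlyOn (fun n => φ n) (fun _ => 1) atTop K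

section CstarDyn

variable {G : Type*} [Group G] [TopologicalSpace G]
variable {A : Type*} [NormedRing A] [StarRing A] [CStarRing A] [NormedAlgebra ℂ A]
  [StarModule ℂ A]

/-- A state on a unital C*-algebra, as a linear functional. -/
def IsStateLF (φ : A →ₗ[ℂ] ℂ) : Prop := φ 1 = 1 ∧ ∀ a : A, 0 ≤ φ (star a * a)

/-- A `G`-invariant state for an action `α` of `G` on `A`. -/
def IsInvariantState (α : G → A ≃⋆ₐ[ℂ] A) (φ : A →ₗ[ℂ] ℂ) : Prop :=
  IsStateLF φ ∧ ∀ (g : G) (a : A), φ (α g a) = φ a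

/-- A mixing `G`-invariant state: `φ(α_g(a) b) → φ(a)φ(b)` as `g → ∞`. -/
def IsMixingState (α : G → A ≃⋆ₐ[ℂ] A) (φ : A →ₗ[ℂ] ℂ) : Prop :=
  IsInvariantState α φ ∧
  ∀ a b : A, Tendsto (fun g : G => φ (α g a * b)) (cocompact G) (𝓝 (φ a * φ b))

/-- The set `S_G(A)` of `G`-invariant states. -/
def invariantStates (α : G → A ≃⋆ₐ[ℂ] A) : Set (A →ₗ[ℂ] ℂ) := {φ | IsInvariantState α φ}

end CstarDyn


section AuxStateLemmas

variable {A : Type*} [NormedRing A] [StarRing A] [CStarRing A] [NormedAlgebra ℂ A]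
  [StarModule ℂ A]

set_option linter.unusedSectionVars false in
lemma stateLF_star {ψ : A →ₗ[ℂ] ℂ} (h : IsStateLF ψ) (a : A) :
    ψ (star a) = (starRingEnd ℂ) (ψ a) := by
  have him : ∀ b : A, (ψ (star b * b)).im = 0 := fun b =>
    ((Complex.nonneg_iff.mp (h.2 b)).2).symm
  have e1 : star (1 + a) * (1 + a) = 1 + a + star a + star a * a := by
    rw [star_add, star_one]; noncomm_ring
  have key : (Complex.I • star a) * (Complex.I • a) = -(star a * a) := by
    rw [smul_mul_smul_comm, Complex.I_mul_I, neg_one_smul]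
  have e2 : star (1 + Complex.I • a) * (1 + Complex.I • a)
      = 1 + Complex.I • a - Complex.I • star a + star a * a := by
    rw [star_add, star_one, star_smul, Complex.star_def, Complex.conj_I, neg_smul,
      ← sub_eq_add_neg, sub_mul, one_mul, mul_add, mul_one, key]
    abel
  have h1 := him (1 + a)
  have h2 := him (1 + Complex.I • a)
  rw [e1] at h1
  rw [e2] at h2
  simp only [map_add, map_sub, map_smul, map_one, h.1, smul_eq_mul] at h1 h2
  have hr := him a
  simp only [Complex.add_im, Complex.sub_im, Complex.one_im, Complex.mul_im,
    Complex.I_re, Complex.I_im, hr] at h1 h2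
  apply Complex.ext
  · simp only [Complex.conj_re]; linarith
  · simp only [Complex.conj_im]; linarith

set_option linter.unusedSectionVars false in
lemma stateLF_cs {ψ : A →ₗ[ℂ] ℂ} (h : IsStateLF ψ) (a : A) :
    ‖ψ a‖ ^ 2 ≤ (ψ (star a * a)).re := by
  set c : ℂ := ψ a with hc
  have hpos := h.2 (a - c • (1 : A))
  have e : star (a - c • (1:A)) * (a - c • (1:A))
      = star a * a - c • star a - (starRingEnd ℂ c) • a + (starRingEnd ℂ c * c) • (1:A) := by
    rw [star_sub, star_smul, star_one, Complex.star_def]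
    simp only [sub_mul, mul_sub, smul_mul_assoc, mul_smul_comm, one_mul, mul_one,
      smul_smul]
    module
  rw [e] at hpos
  simp only [map_add, map_sub, map_smul, h.1, smul_eq_mul, stateLF_star h, ← hc,
    mul_one] at hpos
  have h0 := (Complex.nonneg_iff.mp hpos).1
  have hnsq : ‖c‖ ^ 2 = (c * (starRingEnd ℂ) c).re := by
    rw [Complex.mul_conj, Complex.normSq_eq_norm_sq]
    norm_cast
  simp only [Complex.sub_re, Complex.add_re] at h0
  have h3 : ((starRingEnd ℂ) c * c).re = (c * (starRingEnd ℂ) c).re := by ring_nf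
  rw [hnsq]
  linarith

end AuxStateLemmas

/-- **Proposition 2.3(1)**: if a `G`-invariant state `φ` is not an extreme point of
`S_G(A)`, then there is a nonzero `u_φ(G)`-invariant vector orthogonal to the GNS
cyclic vector `ξ_φ`. -/
theorem exists_invariant_vector_of_not_ergodic
    {G : Type*} [Group G] [TopologicalSpace G] [IsTopologicalGroup G]
    [LocallyCompactSpace G] [SecondCountableTopology G] [T2Space G]
    {A : Type*} [NormedRing A] [StarRing A] [CStarRing A] [NormedAlgebra ℂ A]
    [StarModule ℂ A] [CompleteSpace A] [TopologicalSpace.SeparableSpace A]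
    (α : G → A ≃⋆ₐ[ℂ] A)
    (hα_one : ∀ a : A, α 1 a = a)
    (hα_mul : ∀ (g h : G) (a : A), α (g * h) a = α g (α h a))
    (hα_cont : ∀ a : A, Continuous fun g : G => α g a)
    (φ : A →ₗ[ℂ] ℂ) (hφ : IsInvariantState α φ)
    -- the GNS construction `(π, H, ξ, u)` associated to `(A, φ)`:
    {H : Type*} [NormedAddCommGroup H] [InnerProductSpace ℂ H] [CompleteSpace H]
    (π : A →⋆ₐ[ℂ] (H →L[ℂ] H)) (ξ : H) (hξ : ‖ξ‖ = 1)
    (hcyc : Dense ((Submodule.span ℂ (Set.range fun a : A => π a ξ) : Submodule ℂ H) : Set H))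
    (hGNS : ∀ a : A, φ a = (inner ℂ ξ (π a ξ) : ℂ))
    (u : G → (H →L[ℂ] H))
    (hu_unitary : ∀ g : G, u g ∈ unitary (H →L[ℂ] H))
    (hu_mul : ∀ g h : G, u (g * h) = u g * u h)
    (hu_cov : ∀ (g : G) (a : A), u g (π a ξ) = π (α g a) ξ)
    (hφ_nonerg : φ ∉ Set.extremePoints ℝ (invariantStates α)) :
    ∃ ζ : H, ζ ≠ 0 ∧ (inner ℂ ξ ζ : ℂ) = 0 ∧ ∀ g : G, u g ζ = ζ := by
  classical
  have hφS : φ ∈ invariantStates α := hφ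
  rw [mem_extremePoints] at hφ_nonerg
  push_neg at hφ_nonerg
  obtain ⟨x₁, hx₁, x₂, hx₂, hseg, hne⟩ := hφ_nonerg hφS
  obtain ⟨t, s, ht, hs, hts, heq⟩ := hseg
  have hstate_re : ∀ χ : A →ₗ[ℂ] ℂ, IsStateLF χ → ∀ a : A, 0 ≤ (χ (star a * a)).re :=
    fun χ hχ a => (Complex.nonneg_iff.mp (hχ.2 a)).1
  have hev : ∀ a : A, (φ (star a * a)).re
      = t * (x₁ (star a * a)).re + s * (x₂ (star a * a)).re := by
    intro a
    have h := LinearMap.congr_fun heq (star a * a)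
    rw [LinearMap.add_apply, LinearMap.smul_apply, LinearMap.smul_apply] at h
    rw [← h]
    simp [Complex.add_re, Complex.smul_re, smul_eq_mul]
  have main : ∃ ψ ∈ invariantStates α, ψ ≠ φ ∧ ∃ r : ℝ, 0 < r ∧
      ∀ a : A, r * (ψ (star a * a)).re ≤ (φ (star a * a)).re := by
    by_cases h1 : x₁ = φ
    · refine ⟨x₂, hx₂, hne h1, s, hs, fun a => ?_⟩
      have := hev a
      have h2 := mul_nonneg ht.le (hstate_re x₁ hx₁.1 a)
      linarith
    · refine ⟨x₁, hx₁, h1, t, ht, fun a => ?_⟩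
      have := hev a
      have h2 := mul_nonneg hs.le (hstate_re x₂ hx₂.1 a)
      linarith
  obtain ⟨ψ, hψS, hψne, r, hr, hkey⟩ := main
  -- the GNS norm identity
  have hnorm : ∀ a : A, (φ (star a * a)).re = ‖π a ξ‖ ^ 2 := by
    intro a
    have h1 : φ (star a * a) = (inner ℂ (π a ξ) (π a ξ) : ℂ) := by
      rw [hGNS, map_mul, map_star, ContinuousLinearMap.star_eq_adjoint,
        ContinuousLinearMap.mul_apply, ContinuousLinearMap.adjoint_inner_right]
    rw [h1, inner_self_eq_norm_sq_to_K]
    norm_cast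
  -- the norm bound for ψ against the GNS norm
  have hCb : ∀ a : A, ‖ψ a‖ ≤ Real.sqrt r⁻¹ * ‖π a ξ‖ := by
    intro a
    have h1 : ‖ψ a‖ ^ 2 ≤ (ψ (star a * a)).re := stateLF_cs hψS.1 a
    have h2 := hkey a
    have h4 : (ψ (star a * a)).re ≤ r⁻¹ * (φ (star a * a)).re := by
      have h5 := mul_le_mul_of_nonneg_left h2 (le_of_lt (inv_pos.mpr hr))
      rwa [← mul_assoc, inv_mul_cancel₀ hr.ne', one_mul] at h5
    have h3 : ‖ψ a‖ ^ 2 ≤ r⁻¹ * ‖π a ξ‖ ^ 2 := by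
      rw [← hnorm a]; exact h1.trans h4
    calc ‖ψ a‖ = Real.sqrt (‖ψ a‖ ^ 2) := (Real.sqrt_sq (norm_nonneg _)).symm
      _ ≤ Real.sqrt (r⁻¹ * ‖π a ξ‖ ^ 2) := Real.sqrt_le_sqrt h3
      _ = Real.sqrt r⁻¹ * ‖π a ξ‖ := by
          rw [Real.sqrt_mul (by positivity), Real.sqrt_sq (norm_nonneg _)]
  -- the linear map `a ↦ π a ξ`
  let P : A →ₗ[ℂ] H :=
    { toFun := fun a => π a ξ
      map_add' := fun a b => by simp [map_add]
      map_smul' := fun c a => by simp [map_smul] }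
  have hker : LinearMap.ker P ≤ LinearMap.ker ψ := by
    intro a ha
    rw [LinearMap.mem_ker] at ha ⊢
    have hb := hCb a
    have ha' : π a ξ = 0 := ha
    rw [ha', norm_zero, mul_zero] at hb
    exact norm_le_zero_iff.mp hb
  let f : (LinearMap.range P) →ₗ[ℂ] ℂ :=
    ((LinearMap.ker P).liftQ ψ hker).comp (LinearMap.quotKerEquivRange P).symm.toLinearMap
  have hf : ∀ a : A, f ⟨P a, LinearMap.mem_range_self P a⟩ = ψ a := by
    intro a
    have h1 : (LinearMap.quotKerEquivRange P) (Submodule.Quotient.mk a)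
        = ⟨P a, LinearMap.mem_range_self P a⟩ :=
      Subtype.ext (LinearMap.quotKerEquivRange_apply_mk P a)
    simp only [f, LinearMap.comp_apply, LinearEquiv.coe_toLinearMap, ← h1,
      LinearEquiv.symm_apply_apply, Submodule.liftQ_apply]
  have hfb : ∀ v : LinearMap.range P, ‖f v‖ ≤ Real.sqrt r⁻¹ * ‖v‖ := by
    rintro ⟨v, hv⟩
    obtain ⟨a, rfl⟩ := hv
    rw [hf a]
    exact hCb a
  let F₀ := LinearMap.mkContinuous f (Real.sqrt r⁻¹) hfb
  let e := (LinearMap.range P).subtypeL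
  have hd : Dense (LinearMap.range P : Set H) := by
    have h1 : Submodule.span ℂ (Set.range fun a : A => π a ξ) = LinearMap.range P := by
      have h2 : (Set.range fun a : A => π a ξ) = Set.range ⇑P := rfl
      rw [h2, ← LinearMap.coe_range, Submodule.span_eq]
    rw [h1] at hcyc
    exact hcyc
  have hdense : DenseRange ⇑e := by
    have h1 : Set.range ⇑e = (LinearMap.range P : Set H) := Subtype.range_coe
    rw [DenseRange, h1]
    exact hd
  have huni : IsUniformInducing ⇑e := isometry_subtype_coe.isUniformInducing
  let F := F₀.extend e
  have hF : ∀ a : A, F (π a ξ) = ψ a := by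
    intro a
    have h1 : π a ξ = e ⟨P a, LinearMap.mem_range_self P a⟩ := rfl
    rw [h1]
    rw [show F = F₀.extend e from rfl, ContinuousLinearMap.extend_eq F₀ hdense huni]
    exact hf a
  let η := (InnerProductSpace.toDual ℂ H).symm F
  have hη : ∀ a : A, (inner ℂ η (π a ξ) : ℂ) = ψ a := fun a => by
    rw [show η = (InnerProductSpace.toDual ℂ H).symm F from rfl,
      InnerProductSpace.toDual_symm_apply]
    exact hF a
  -- vanishing on the dense range means zero
  have hzero : ∀ w : H, (∀ a : A, (inner ℂ w (π a ξ) : ℂ) = 0) → w = 0 := by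
    intro w hw
    have hm : w ∈ (LinearMap.range P)ᗮ := by
      rw [Submodule.mem_orthogonal]
      rintro v ⟨a, rfl⟩
      show (inner ℂ (π a ξ) w : ℂ) = 0
      rw [← inner_conj_symm, hw a, map_zero]
    have horth : (LinearMap.range P)ᗮ = ⊥ := by
      rw [← Submodule.topologicalClosure_eq_top_iff]
      apply SetLike.ext'
      rw [Submodule.topologicalClosure_coe, Submodule.top_coe]
      exact hd.closure_eq
    rw [horth] at hm
    exact (Submodule.mem_bot ℂ).mp hm
  -- `u g` preserves the inner ℂ product
  have huinner : ∀ (g : G) (x y : H), (inner ℂ (u g x) (u g y) : ℂ) = inner ℂ x y := by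
    intro g x y
    have h1 : star (u g) * u g = 1 := (Unitary.mem_iff.mp (hu_unitary g)).1
    calc (inner ℂ (u g x) (u g y) : ℂ)
        = inner ℂ x ((ContinuousLinearMap.adjoint (u g)) (u g y)) :=
          (ContinuousLinearMap.adjoint_inner_right (u g) x (u g y)).symm
      _ = inner ℂ x ((star (u g) * u g) y) := by
          rw [ContinuousLinearMap.mul_apply, ContinuousLinearMap.star_eq_adjoint]
      _ = inner ℂ x y := by rw [h1, ContinuousLinearMap.one_apply]
  have huξ : ∀ g : G, u g ξ = ξ := by
    intro g
    have h1 := hu_cov g 1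
    simpa using h1
  -- η is u-invariant
  have hηg : ∀ g : G, u g η = η := by
    intro g
    have hsub : ∀ a : A, (inner ℂ (u g η - η) (π a ξ) : ℂ) = 0 := by
      intro a
      have hcov2 : u g (π ((α g⁻¹) a) ξ) = π a ξ := by
        rw [hu_cov, ← hα_mul, mul_inv_cancel, hα_one]
      have h2 : (inner ℂ (u g η) (π a ξ) : ℂ) = ψ a := by
        rw [← hcov2, huinner, hη, hψS.2 g⁻¹ a]
      rw [inner_sub_left, h2, hη a, sub_self]
    exact sub_eq_zero.mp (hzero _ hsub)
  refine ⟨η - (inner ℂ ξ η : ℂ) • ξ, ?_, ?_, ?_⟩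
  · intro hz
    apply hψne
    have hc : η = (inner ℂ ξ η : ℂ) • ξ := by rwa [sub_eq_zero] at hz
    have hval : ∀ a : A, ψ a = (starRingEnd ℂ) (inner ℂ ξ η : ℂ) * φ a := by
      intro a
      conv_lhs => rw [← hη a, hc]
      rw [inner_smul_left, ← hGNS a]
    have h1 : (starRingEnd ℂ) (inner ℂ ξ η : ℂ) = 1 := by
      have h2 := hval 1
      rw [hψS.1.1, hφ.1.1, mul_one] at h2
      exact h2.symm
    exact LinearMap.ext fun a => by rw [hval a, h1, one_mul]
  · rw [inner_sub_right, inner_smul_right, inner_self_eq_norm_sq_to_K, hξ]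
    norm_num
  · intro g
    rw [map_sub, map_smul, hηg g, huξ g]
end
end

section
/- Let (A,G,α) be a C*-dynamical system, let φ = (φ_n)_{n≥1} be a sequence of ergodic G-invariant states on A, let B = ⊗_{n≥1} A be the infinite minimal tensor product with the diagonal G-action β, and let J_G(B,φ) be the set of G-invariant states ψ on B whose n-th marginal satisfies ψ(1⊗⋯⊗a⊗1⊗⋯) = φ_n(a) (a in the n-th position) for all n and all a ∈ A. If ψ ∈ J_G(B,φ) is an extreme point of J_G(B,φ), then ψ is an extreme point of S_G(B). -/
open Filter Topology ComplexOrder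

noncomputable section

/-- The elementary product `ι 0 (x 0) * ι 1 (x 1) * ⋯ * ι (N-1) (x (N-1))` representing the
elementary tensor `x 0 ⊗ x 1 ⊗ ⋯ ⊗ x (N-1) ⊗ 1 ⊗ ⋯` in an infinite tensor product realized
through embeddings `ι n` of the factors. -/
def elemProd {A B : Type*} [NormedRing A] [StarRing A] [CStarRing A] [NormedAlgebra ℂ A]
    [StarModule ℂ A] [NormedRing B] [StarRing B] [CStarRing B] [NormedAlgebra ℂ B]
    [StarModule ℂ B] (ι : ℕ → (A →⋆ₐ[ℂ] B)) (N : ℕ) (x : ℕ → A) : B :=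
  ((List.range N).map fun i => ι i (x i)).prod

/-- **Lemma 2.4(1)**: if all `φ_n` are ergodic `G`-invariant states on `A` and `ψ` is an
extreme point of the set `J_G(B,φ)` of joinings (invariant states on the infinite minimal
tensor product `B = ⊗_{n≥1} A` with `n`-th marginal `φ_n`), then `ψ` is an extreme point
of `S_G(B)`. -/
theorem extreme_joining_is_ergodic
    {G : Type*} [Group G] [TopologicalSpace G] [IsTopologicalGroup G]
    [LocallyCompactSpace G] [SecondCountableTopology G] [T2Space G]
    {A : Type*} [NormedRing A] [StarRing A] [CStarRing A] [NormedAlgebra ℂ A]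
    [StarModule ℂ A] [CompleteSpace A] [TopologicalSpace.SeparableSpace A]
    {B : Type*} [NormedRing B] [StarRing B] [CStarRing B] [NormedAlgebra ℂ B]
    [StarModule ℂ B] [CompleteSpace B] [TopologicalSpace.SeparableSpace B]
    (α : G → A ≃⋆ₐ[ℂ] A)
    (hα_one : ∀ a : A, α 1 a = a)
    (hα_mul : ∀ (g h : G) (a : A), α (g * h) a = α g (α h a))
    (hα_cont : ∀ a : A, Continuous fun g : G => α g a)
    (β : G → B ≃⋆ₐ[ℂ] B)
    (hβ_one : ∀ b : B, β 1 b = b)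
    (hβ_mul : ∀ (g h : G) (b : B), β (g * h) b = β g (β h b))
    (hβ_cont : ∀ b : B, Continuous fun g : G => β g b)
    (ι : ℕ → (A →⋆ₐ[ℂ] B))
    (hcomm : ∀ m n : ℕ, m ≠ n → ∀ x y : A, Commute (ι m x) (ι n y))
    (hdense : Dense
      ((Submodule.span ℂ {b : B | ∃ (N : ℕ) (x : ℕ → A), b = elemProd ι N x} :
        Submodule ℂ B) : Set B))
    (hequiv : ∀ (g : G) (n : ℕ) (a : A), β g (ι n a) = ι n (α g a))
    (φs : ℕ → (A →ₗ[ℂ] ℂ))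
    (herg : ∀ n, φs n ∈ Set.extremePoints ℝ (invariantStates α))
    (ψ : B →ₗ[ℂ] ℂ)
    (hψ : ψ ∈ Set.extremePoints ℝ
      {ω : B →ₗ[ℂ] ℂ | IsInvariantState β ω ∧ ∀ (n : ℕ) (a : A), ω (ι n a) = φs n a}) :
    ψ ∈ Set.extremePoints ℝ (invariantStates β) := by
  obtain ⟨⟨hψinv, hψmarg⟩, hψext⟩ := hψ
  refine ⟨hψinv, ?_⟩
  intro ω1 hω1 ω2 hω2 hseg
  -- the marginal of an invariant state is an invariant state on A
  have key : ∀ ω : B →ₗ[ℂ] ℂ, ω ∈ invariantStates β → ∀ n : ℕ,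
      IsInvariantState α (ω.comp (ι n).toAlgHom.toLinearMap) := by
    intro ω hω n
    refine ⟨⟨?_, ?_⟩, ?_⟩
    · show ω (ι n 1) = 1
      rw [map_one]; exact hω.1.1
    · intro a
      show (0 : ℂ) ≤ ω (ι n (star a * a))
      rw [map_mul, map_star]
      exact hω.1.2 (ι n a)
    · intro g a
      show ω (ι n (α g a)) = ω (ι n a)
      rw [← hequiv g n a]
      exact hω.2 g (ι n a)
  obtain ⟨a, b, ha, hb, hab, hcomb⟩ := hseg
  -- the marginals of ω1, ω2 equal φs n by ergodicity
  have hmarg : ∀ n : ℕ,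
      ω1.comp (ι n).toAlgHom.toLinearMap = φs n ∧
      ω2.comp (ι n).toAlgHom.toLinearMap = φs n := by
    intro n
    have hseg' : φs n ∈ openSegment ℝ (ω1.comp (ι n).toAlgHom.toLinearMap)
        (ω2.comp (ι n).toAlgHom.toLinearMap) := by
      refine ⟨a, b, ha, hb, hab, ?_⟩
      ext x
      have := congrArg (fun f : B →ₗ[ℂ] ℂ => f (ι n x)) hcomb
      simp only [LinearMap.add_apply, LinearMap.smul_apply] at this ⊢
      simpa [hψmarg n x] using this
    exact ⟨(herg n).2 (key ω1 hω1 n) (key ω2 hω2 n) hseg',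
      (herg n).2 (key ω2 hω2 n) (key ω1 hω1 n) (by rw [openSegment_symm]; exact hseg')⟩
  have hω1J : ω1 ∈ {ω : B →ₗ[ℂ] ℂ | IsInvariantState β ω ∧
      ∀ (n : ℕ) (x : A), ω (ι n x) = φs n x} :=
    ⟨hω1, fun n x => by rw [← (hmarg n).1]; rfl⟩
  have hω2J : ω2 ∈ {ω : B →ₗ[ℂ] ℂ | IsInvariantState β ω ∧
      ∀ (n : ℕ) (x : A), ω (ι n x) = φs n x} :=
    ⟨hω2, fun n x => by rw [← (hmarg n).2]; rfl⟩
  exact hψext hω1J hω2J ⟨a, b, ha, hb, hab, hcomb⟩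
end
end

section
/- Let (A,G,α) be a C*-dynamical system, let (φ_n)_{n≥1} be a sequence of mixing G-invariant states on A, and let B = ⊗_{n≥1} A be the infinite minimal tensor product with the diagonal G-action β. Then the infinite product state ⊗_{n≥1}φ_n is a mixing G-invariant state on B. -/
open Filter Topology ComplexOrder

noncomputable section

section AuxLemmas

private lemma state_bound {B : Type*} [NormedRing B] [StarRing B] [CStarRing B]
    [NormedAlgebra ℂ B] [StarModule ℂ B] [CompleteSpace B] (ψ : B →ₗ[ℂ] ℂ) (h1 : ψ 1 = 1)
    (hpos : ∀ b : B, 0 ≤ ψ (star b * b)) (x : B) : ‖ψ x‖ ≤ 2 * ‖x‖ := by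
  letI : CStarAlgebra B :=
    { ‹NormedRing B›, ‹StarRing B›, ‹CStarRing B›, ‹NormedAlgebra ℂ B›, ‹StarModule ℂ B›,
      ‹CompleteSpace B› with }
  letI : PartialOrder B := CStarAlgebra.spectralOrder B
  haveI : StarOrderedRing B := CStarAlgebra.spectralOrderedRing B
  have hmono : ∀ c : B, 0 ≤ c → 0 ≤ ψ c := by
    intro c hc
    rw [StarOrderedRing.nonneg_iff] at hc
    induction hc using AddSubmonoid.closure_induction with
    | mem z hz => obtain ⟨s, rfl⟩ := hz; exact hpos s
    | zero => simp
    | add z w _ _ hz hw => rw [map_add]; exact add_nonneg hz hw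
  have halg : ∀ r : ℝ, ψ (algebraMap ℝ B r) = (r : ℂ) := by
    intro r
    rw [IsScalarTower.algebraMap_apply ℝ ℂ B, Algebra.algebraMap_eq_smul_one, map_smul, h1]
    simp
  have hsa : ∀ a : B, IsSelfAdjoint a → ‖ψ a‖ ≤ ‖a‖ := by
    intro a ha
    have k1 : 0 ≤ ψ (algebraMap ℝ B ‖a‖ - a) :=
      hmono _ (sub_nonneg.mpr ha.le_algebraMap_norm_self)
    have k2 : 0 ≤ ψ (algebraMap ℝ B ‖-a‖ - (-a)) :=
      hmono _ (sub_nonneg.mpr (ha.neg).le_algebraMap_norm_self)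
    rw [map_sub, halg, Complex.le_def] at k1
    rw [map_sub, halg, map_neg, norm_neg] at k2
    rw [Complex.le_def] at k2
    simp only [Complex.sub_re, Complex.sub_im, Complex.ofReal_re, Complex.ofReal_im,
      Complex.zero_re, Complex.zero_im, Complex.neg_re, Complex.neg_im, sub_neg_eq_add,
      Complex.add_re, Complex.add_im] at k1 k2
    have him : (ψ a).im = 0 := by linarith [k1.2, k2.2]
    have : ψ a = ((ψ a).re : ℂ) := Complex.ext (by simp) (by simp [him])
    rw [this, Complex.norm_real, Real.norm_eq_abs, abs_le]
    constructor <;> linarith [k1.1, k2.1]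
  have hre := hsa (realPart x) (realPart x).2
  have him := hsa (imaginaryPart x) (imaginaryPart x).2
  calc ‖ψ x‖ = ‖ψ (↑(realPart x) + Complex.I • ↑(imaginaryPart x))‖ := by
        rw [realPart_add_I_smul_imaginaryPart]
    _ ≤ ‖ψ (realPart x : B)‖ + ‖ψ (Complex.I • (imaginaryPart x : B))‖ := by
        rw [map_add]; exact norm_add_le _ _
    _ ≤ ‖(realPart x : B)‖ + ‖(imaginaryPart x : B)‖ := by
        rw [map_smul, norm_smul]; simp only [Complex.norm_I, one_mul]
        exact add_le_add hre him
    _ ≤ ‖x‖ + ‖x‖ := by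
        have h1' : ‖(realPart x : B)‖ ≤ ‖x‖ := by
          rw [realPart_apply_coe, norm_smul]
          calc ‖(2:ℝ)⁻¹‖ * ‖x + star x‖ ≤ 2⁻¹ * (‖x‖ + ‖star x‖) := by
                rw [Real.norm_eq_abs, abs_of_nonneg (by norm_num : (0:ℝ) ≤ 2⁻¹)]
                exact mul_le_mul_of_nonneg_left (norm_add_le _ _) (by norm_num)
            _ = ‖x‖ := by rw [norm_star]; ring
        have h2' : ‖(imaginaryPart x : B)‖ ≤ ‖x‖ := by
          rw [imaginaryPart_apply_coe, norm_smul, norm_smul]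
          calc ‖-Complex.I‖ * (‖(2:ℝ)⁻¹‖ * ‖x - star x‖) ≤ 1 * (2⁻¹ * (‖x‖ + ‖star x‖)) := by
                rw [norm_neg, Complex.norm_I, Real.norm_eq_abs,
                  abs_of_nonneg (by norm_num : (0:ℝ) ≤ 2⁻¹)]
                exact mul_le_mul_of_nonneg_left
                  (mul_le_mul_of_nonneg_left (norm_sub_le _ _) (by norm_num)) (by norm_num)
            _ = ‖x‖ := by rw [norm_star]; ring
        exact add_le_add h1' h2'
    _ = 2 * ‖x‖ := by ring

section elemProdLemmas
variable {A B : Type*} [NormedRing A] [StarRing A] [CStarRing A] [NormedAlgebra ℂ A]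
    [StarModule ℂ A] [NormedRing B] [StarRing B] [CStarRing B] [NormedAlgebra ℂ B]
    [StarModule ℂ B] (ι : ℕ → (A →⋆ₐ[ℂ] B))

private lemma elemProd_zero (x : ℕ → A) : elemProd ι 0 x = 1 := by simp [elemProd]

private lemma elemProd_succ (N : ℕ) (x : ℕ → A) :
    elemProd ι (N + 1) x = elemProd ι N x * ι N (x N) := by
  simp [elemProd, List.range_succ]

private lemma elemProd_congr (N : ℕ) (x y : ℕ → A) (h : ∀ i < N, x i = y i) :
    elemProd ι N x = elemProd ι N y := by
  unfold elemProd
  congr 1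
  exact List.map_congr_left fun i hi => by rw [h i (List.mem_range.mp hi)]

private lemma commute_elemProd (hcomm : ∀ m n : ℕ, m ≠ n → ∀ x y : A, Commute (ι m x) (ι n y))
    (N : ℕ) (a : A) (y : ℕ → A) (hN : ∀ i < N, i ≠ N) :
    Commute (ι N a) (elemProd ι N y) := by
  apply Commute.list_prod_right
  intro z hz
  simp only [List.mem_map, List.mem_range] at hz
  obtain ⟨i, hi, rfl⟩ := hz
  exact hcomm N i (hN i hi).symm a (y i)

private lemma elemProd_mul (hcomm : ∀ m n : ℕ, m ≠ n → ∀ x y : A, Commute (ι m x) (ι n y))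
    (N : ℕ) (x y : ℕ → A) :
    elemProd ι N x * elemProd ι N y = elemProd ι N (fun i => x i * y i) := by
  induction N with
  | zero => simp [elemProd_zero]
  | succ N ih =>
    have hc : Commute (ι N (x N)) (elemProd ι N y) :=
      commute_elemProd ι hcomm N (x N) y fun i hi => Nat.ne_of_lt hi
    rw [elemProd_succ, elemProd_succ, elemProd_succ]
    calc elemProd ι N x * ι N (x N) * (elemProd ι N y * ι N (y N))
        = elemProd ι N x * (ι N (x N) * elemProd ι N y) * ι N (y N) := by
          simp [mul_assoc]
      _ = elemProd ι N x * (elemProd ι N y * ι N (x N)) * ι N (y N) := by rw [hc.eq]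
      _ = (elemProd ι N x * elemProd ι N y) * (ι N (x N) * ι N (y N)) := by
          simp [mul_assoc]
      _ = elemProd ι N (fun i => x i * y i) * ι N (x N * y N) := by rw [ih, map_mul]

private lemma elemProd_pad (N K : ℕ) (hNK : N ≤ K) (x : ℕ → A) (hx : ∀ i, N ≤ i → x i = 1) :
    elemProd ι K x = elemProd ι N x := by
  induction K, hNK using Nat.le_induction with
  | base => rfl
  | succ K hK ih => rw [elemProd_succ, hx K hK, map_one, mul_one, ih]

private lemma map_elemProd (e : B ≃⋆ₐ[ℂ] B) (f : ℕ → A → A)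
    (he : ∀ n (a : A), e (ι n a) = ι n (f n a)) (N : ℕ) (x : ℕ → A) :
    e (elemProd ι N x) = elemProd ι N (fun i => f i (x i)) := by
  induction N with
  | zero => simp [elemProd_zero]
  | succ N ih => rw [elemProd_succ, map_mul, ih, he, elemProd_succ]

end elemProdLemmas

end AuxLemmas

/-- **Lemma 2.4(2)**: the infinite product state `⊗_{n≥1} φ_n` of mixing `G`-invariant
states `φ_n` on `A` is a mixing `G`-invariant state on the infinite minimal tensor
product `B = ⊗_{n≥1} A` equipped with the diagonal action `β`. The infinite tensor
product is realized through unital embeddings `ι n : A → B` with commuting ranges whose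
elementary products are total in `B`. -/
theorem infinite_product_of_mixing_is_mixing
    {G : Type*} [Group G] [TopologicalSpace G] [IsTopologicalGroup G]
    [LocallyCompactSpace G] [SecondCountableTopology G] [T2Space G]
    {A : Type*} [NormedRing A] [StarRing A] [CStarRing A] [NormedAlgebra ℂ A]
    [StarModule ℂ A] [CompleteSpace A] [TopologicalSpace.SeparableSpace A]
    {B : Type*} [NormedRing B] [StarRing B] [CStarRing B] [NormedAlgebra ℂ B]
    [StarModule ℂ B] [CompleteSpace B] [TopologicalSpace.SeparableSpace B]
    (α : G → A ≃⋆ₐ[ℂ] A)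
    (hα_one : ∀ a : A, α 1 a = a)
    (hα_mul : ∀ (g h : G) (a : A), α (g * h) a = α g (α h a))
    (hα_cont : ∀ a : A, Continuous fun g : G => α g a)
    (β : G → B ≃⋆ₐ[ℂ] B)
    (hβ_one : ∀ b : B, β 1 b = b)
    (hβ_mul : ∀ (g h : G) (b : B), β (g * h) b = β g (β h b))
    (hβ_cont : ∀ b : B, Continuous fun g : G => β g b)
    (ι : ℕ → (A →⋆ₐ[ℂ] B))
    (hcomm : ∀ m n : ℕ, m ≠ n → ∀ x y : A, Commute (ι m x) (ι n y))
    (hdense : Dense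
      ((Submodule.span ℂ {b : B | ∃ (N : ℕ) (x : ℕ → A), b = elemProd ι N x} :
        Submodule ℂ B) : Set B))
    (hequiv : ∀ (g : G) (n : ℕ) (a : A), β g (ι n a) = ι n (α g a))
    (φs : ℕ → (A →ₗ[ℂ] ℂ)) (hmix : ∀ n, IsMixingState α (φs n))
    (ψ : B →ₗ[ℂ] ℂ) (hψ : IsStateLF ψ)
    (hψprod : ∀ (N : ℕ) (x : ℕ → A),
      ψ (elemProd ι N x) = ∏ i ∈ Finset.range N, φs i (x i)) :
    IsMixingState β ψ := by
  letI : CStarAlgebra B :=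
    { ‹NormedRing B›, ‹StarRing B›, ‹CStarRing B›, ‹NormedAlgebra ℂ B›, ‹StarModule ℂ B›,
      ‹CompleteSpace B› with }
  obtain ⟨hψ1, hψpos⟩ := hψ
  have hφ1 : ∀ n : ℕ, φs n 1 = 1 := fun n => (hmix n).1.1.1
  have hφinv : ∀ (n : ℕ) (g : G) (a : A), φs n (α g a) = φs n a := fun n => (hmix n).1.2
  have hφmix : ∀ (n : ℕ) (a b : A),
      Tendsto (fun g : G => φs n (α g a * b)) (cocompact G) (𝓝 (φs n a * φs n b)) :=
    fun n => (hmix n).2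
  have hψbd : ∀ x : B, ‖ψ x‖ ≤ 2 * ‖x‖ := state_bound ψ hψ1 hψpos
  have hψcont : Continuous ψ := AddMonoidHomClass.continuous_of_bound ψ 2 hψbd
  have hβnorm : ∀ (g : G) (x : B), ‖β g x‖ = ‖x‖ := fun g => StarAlgEquiv.norm_map (β g)
  set S : Set B := {b : B | ∃ (N : ℕ) (x : ℕ → A), b = elemProd ι N x} with hSdef
  -- invariance on elementary products
  have hinv_elem : ∀ (g : G) (b : B), b ∈ S → ψ (β g b) = ψ b := by
    rintro g _ ⟨N, x, rfl⟩
    rw [map_elemProd ι (β g) (fun n a => α g a) (fun n a => hequiv g n a) N x, hψprod, hψprod]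
    exact Finset.prod_congr rfl fun i _ => hφinv i g (x i)
  have hinv_span : ∀ (g : G) (b : B), b ∈ Submodule.span ℂ S → ψ (β g b) = ψ b := by
    intro g b hb
    induction hb using Submodule.span_induction with
    | mem z hz => exact hinv_elem g z hz
    | zero => simp
    | add u v _ _ hu hv => rw [map_add, map_add, map_add, hu, hv]
    | smul c u _ hu => rw [map_smul, map_smul, map_smul, hu]
  have hinv : ∀ (g : G) (b : B), ψ (β g b) = ψ b := by
    intro g b
    have h1 : Continuous fun b : B => ψ (β g b) :=
      hψcont.comp (StarAlgEquiv.isometry (β g)).continuous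
    exact congrFun (Continuous.ext_on hdense h1 hψcont fun z hz => hinv_span g z hz) b
  -- mixing on elementary products
  have hmix_elem : ∀ b₁ ∈ S, ∀ b₂ ∈ S,
      Tendsto (fun g : G => ψ (β g b₁ * b₂)) (cocompact G) (𝓝 (ψ b₁ * ψ b₂)) := by
    rintro _ ⟨N, x, rfl⟩ _ ⟨M, y, rfl⟩
    obtain ⟨x', hx1, hx2⟩ : ∃ x' : ℕ → A, (∀ i < N, x' i = x i) ∧ ∀ i, N ≤ i → x' i = 1 :=
      ⟨fun i => if i < N then x i else 1, fun i hi => if_pos hi,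
        fun i hi => if_neg (not_lt.mpr hi)⟩
    obtain ⟨y', hy1, hy2⟩ : ∃ y' : ℕ → A, (∀ i < M, y' i = y i) ∧ ∀ i, M ≤ i → y' i = 1 :=
      ⟨fun i => if i < M then y i else 1, fun i hi => if_pos hi,
        fun i hi => if_neg (not_lt.mpr hi)⟩
    set K := max N M with hK
    have hxK : elemProd ι K x' = elemProd ι N x :=
      (elemProd_pad ι N K (le_max_left N M) x' hx2).trans (elemProd_congr ι N x' x hx1)
    have hyK : elemProd ι K y' = elemProd ι M y :=
      (elemProd_pad ι M K (le_max_right N M) y' hy2).trans (elemProd_congr ι M y' y hy1)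
    have key : ∀ g : G, ψ (β g (elemProd ι N x) * elemProd ι M y)
        = ∏ i ∈ Finset.range K, φs i (α g (x' i) * y' i) := by
      intro g
      rw [← hxK, ← hyK, map_elemProd ι (β g) (fun n a => α g a) (fun n a => hequiv g n a) K x',
        elemProd_mul ι hcomm K _ y', hψprod]
    have e1 : ∏ i ∈ Finset.range K, φs i (x' i) = ∏ i ∈ Finset.range N, φs i (x i) := by
      rw [← Finset.prod_subset (Finset.range_subset_range.mpr (le_max_left N M))
        (fun i _ hi => by
          rw [hx2 i (le_of_not_gt fun h => hi (Finset.mem_range.mpr h)), hφ1 i])]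
      exact Finset.prod_congr rfl fun i hi => by rw [hx1 i (Finset.mem_range.mp hi)]
    have e2 : ∏ i ∈ Finset.range K, φs i (y' i) = ∏ i ∈ Finset.range M, φs i (y i) := by
      rw [← Finset.prod_subset (Finset.range_subset_range.mpr (le_max_right N M))
        (fun i _ hi => by
          rw [hy2 i (le_of_not_gt fun h => hi (Finset.mem_range.mpr h)), hφ1 i])]
      exact Finset.prod_congr rfl fun i hi => by rw [hy1 i (Finset.mem_range.mp hi)]
    have hlim : (∏ i ∈ Finset.range K, (φs i (x' i) * φs i (y' i)))
        = ψ (elemProd ι N x) * ψ (elemProd ι M y) := by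
      rw [Finset.prod_mul_distrib, hψprod, hψprod, e1, e2]
    have hT : Tendsto (fun g : G => ∏ i ∈ Finset.range K, φs i (α g (x' i) * y' i))
        (cocompact G) (𝓝 (∏ i ∈ Finset.range K, φs i (x' i) * φs i (y' i))) :=
      tendsto_finset_prod _ fun i _ => hφmix i (x' i) (y' i)
    rw [hlim] at hT
    exact Filter.Tendsto.congr (fun g => (key g).symm) hT
  -- extend mixing to the span, second variable
  have hmixA : ∀ b₁ ∈ S, ∀ b₂ ∈ Submodule.span ℂ S,
      Tendsto (fun g : G => ψ (β g b₁ * b₂)) (cocompact G) (𝓝 (ψ b₁ * ψ b₂)) := by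
    intro b₁ hb₁ b₂ hb₂
    induction hb₂ using Submodule.span_induction with
    | mem z hz => exact hmix_elem b₁ hb₁ z hz
    | zero => simpa using tendsto_const_nhds
    | add u v _ _ hu hv =>
      have heq : (fun g : G => ψ (β g b₁ * (u + v)))
          = fun g : G => ψ (β g b₁ * u) + ψ (β g b₁ * v) := by
        funext g; rw [mul_add, map_add]
      rw [heq, map_add, mul_add]
      exact hu.add hv
    | smul c u _ hu =>
      have heq : (fun g : G => ψ (β g b₁ * (c • u))) = fun g : G => c * ψ (β g b₁ * u) := by
        funext g; rw [mul_smul_comm, map_smul, smul_eq_mul]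
      rw [heq, map_smul, smul_eq_mul, ← mul_assoc, mul_comm (ψ b₁) c, mul_assoc]
      exact hu.const_mul c
  -- extend mixing to the span, first variable
  have hmixB : ∀ b₁ ∈ Submodule.span ℂ S, ∀ b₂ ∈ Submodule.span ℂ S,
      Tendsto (fun g : G => ψ (β g b₁ * b₂)) (cocompact G) (𝓝 (ψ b₁ * ψ b₂)) := by
    intro b₁ hb₁ b₂ hb₂
    induction hb₁ using Submodule.span_induction with
    | mem z hz => exact hmixA z hz b₂ hb₂
    | zero => simpa using tendsto_const_nhds
    | add u v _ _ hu hv =>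
      have heq : (fun g : G => ψ (β g (u + v) * b₂))
          = fun g : G => ψ (β g u * b₂) + ψ (β g v * b₂) := by
        funext g; rw [map_add, add_mul, map_add]
      rw [heq, map_add, add_mul]
      exact hu.add hv
    | smul c u _ hu =>
      have heq : (fun g : G => ψ (β g (c • u) * b₂)) = fun g : G => c * ψ (β g u * b₂) := by
        funext g; rw [map_smul, smul_mul_assoc, map_smul, smul_eq_mul]
      rw [heq, map_smul, smul_eq_mul, mul_assoc]
      exact hu.const_mul c
  refine ⟨⟨⟨hψ1, hψpos⟩, hinv⟩, ?_⟩
  intro a b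
  rw [Metric.tendsto_nhds]
  intro ε hε
  set D := ‖a‖ + ‖b‖ + 1 with hD
  have hDpos : 0 < D := by positivity
  set δ := min 1 (ε / (24 * D)) with hδ
  have hδpos : 0 < δ := lt_min one_pos (by positivity)
  obtain ⟨a', ha'S, ha'⟩ := Metric.mem_closure_iff.mp (hdense a) δ hδpos
  obtain ⟨b', hb'S, hb'⟩ := Metric.mem_closure_iff.mp (hdense b) δ hδpos
  rw [dist_eq_norm] at ha' hb'
  have hδ1 : δ ≤ 1 := min_le_left _ _
  have hδ2 : δ ≤ ε / (24 * D) := min_le_right _ _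
  have hδD : δ * D ≤ ε / 24 := by
    calc δ * D ≤ ε / (24 * D) * D := mul_le_mul_of_nonneg_right hδ2 hDpos.le
      _ = ε / 24 := by field_simp
  have hbD : ‖b‖ ≤ D := by rw [hD]; linarith [norm_nonneg a]
  have haD : ‖a‖ ≤ D := by rw [hD]; linarith [norm_nonneg b]
  have ha'D : ‖a'‖ ≤ D := by
    have h0 : a' = a - (a - a') := by abel
    calc ‖a'‖ = ‖a - (a - a')‖ := by rw [← h0]
      _ ≤ ‖a‖ + ‖a - a'‖ := norm_sub_le _ _
      _ ≤ D := by rw [hD]; linarith [norm_nonneg b, ha'.le.trans hδ1]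
  have hb'D : ‖b'‖ ≤ D := by
    have h0 : b' = b - (b - b') := by abel
    calc ‖b'‖ = ‖b - (b - b')‖ := by rw [← h0]
      _ ≤ ‖b‖ + ‖b - b'‖ := norm_sub_le _ _
      _ ≤ D := by rw [hD]; linarith [norm_nonneg a, hb'.le.trans hδ1]
  have hT := hmixB a' ha'S b' hb'S
  have hev := (Metric.tendsto_nhds.mp hT) (ε / 3) (by positivity)
  filter_upwards [hev] with g hg
  have est1 : ‖ψ (β g a * b) - ψ (β g a' * b')‖ ≤ 4 * (δ * D) := by
    have hsplit : β g a * b - β g a' * b' = β g (a - a') * b + β g a' * (b - b') := by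
      rw [map_sub, sub_mul, mul_sub]; abel
    have hn : ‖β g (a - a') * b + β g a' * (b - b')‖ ≤ δ * D + D * δ := by
      calc ‖β g (a - a') * b + β g a' * (b - b')‖
          ≤ ‖β g (a - a') * b‖ + ‖β g a' * (b - b')‖ := norm_add_le _ _
        _ ≤ ‖β g (a - a')‖ * ‖b‖ + ‖β g a'‖ * ‖b - b'‖ :=
            add_le_add (norm_mul_le _ _) (norm_mul_le _ _)
        _ = ‖a - a'‖ * ‖b‖ + ‖a'‖ * ‖b - b'‖ := by rw [hβnorm, hβnorm]
        _ ≤ δ * D + D * δ :=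
            add_le_add (mul_le_mul ha'.le hbD (norm_nonneg _) hδpos.le)
              (mul_le_mul ha'D hb'.le (norm_nonneg _) hDpos.le)
    calc ‖ψ (β g a * b) - ψ (β g a' * b')‖ = ‖ψ (β g a * b - β g a' * b')‖ := by rw [map_sub]
      _ ≤ 2 * ‖β g a * b - β g a' * b'‖ := hψbd _
      _ = 2 * ‖β g (a - a') * b + β g a' * (b - b')‖ := by rw [hsplit]
      _ ≤ 2 * (δ * D + D * δ) := by linarith [hn]
      _ = 4 * (δ * D) := by ring
  have est3 : ‖ψ a' * ψ b' - ψ a * ψ b‖ ≤ 8 * (δ * D) := by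
    have hA : ‖ψ a' - ψ a‖ ≤ 2 * δ := by
      rw [← map_sub]
      calc ‖ψ (a' - a)‖ ≤ 2 * ‖a' - a‖ := hψbd _
        _ = 2 * ‖a - a'‖ := by rw [norm_sub_rev]
        _ ≤ 2 * δ := by linarith [ha'.le]
    have hB : ‖ψ b'‖ ≤ 2 * D := le_trans (hψbd b') (by linarith [hb'D])
    have hC : ‖ψ a‖ ≤ 2 * D := le_trans (hψbd a) (by linarith [haD])
    have hDh : ‖ψ b' - ψ b‖ ≤ 2 * δ := by
      rw [← map_sub]
      calc ‖ψ (b' - b)‖ ≤ 2 * ‖b' - b‖ := hψbd _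
        _ = 2 * ‖b - b'‖ := by rw [norm_sub_rev]
        _ ≤ 2 * δ := by linarith [hb'.le]
    have hsplit : ψ a' * ψ b' - ψ a * ψ b = (ψ a' - ψ a) * ψ b' + ψ a * (ψ b' - ψ b) := by
      ring
    calc ‖ψ a' * ψ b' - ψ a * ψ b‖
        = ‖(ψ a' - ψ a) * ψ b' + ψ a * (ψ b' - ψ b)‖ := by rw [hsplit]
      _ ≤ ‖(ψ a' - ψ a) * ψ b'‖ + ‖ψ a * (ψ b' - ψ b)‖ := norm_add_le _ _
      _ ≤ ‖ψ a' - ψ a‖ * ‖ψ b'‖ + ‖ψ a‖ * ‖ψ b' - ψ b‖ :=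
          add_le_add (norm_mul_le _ _) (norm_mul_le _ _)
      _ ≤ 2 * δ * (2 * D) + 2 * D * (2 * δ) :=
          add_le_add (mul_le_mul hA hB (norm_nonneg _) (by positivity))
            (mul_le_mul hC hDh (norm_nonneg _) (by positivity))
      _ = 8 * (δ * D) := by ring
  have htri : dist (ψ (β g a * b)) (ψ a * ψ b)
      ≤ ‖ψ (β g a * b) - ψ (β g a' * b')‖ + dist (ψ (β g a' * b')) (ψ a' * ψ b')
        + ‖ψ a' * ψ b' - ψ a * ψ b‖ := by
    calc dist (ψ (β g a * b)) (ψ a * ψ b)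
        ≤ dist (ψ (β g a * b)) (ψ (β g a' * b')) + dist (ψ (β g a' * b')) (ψ a * ψ b) :=
          dist_triangle _ _ _
      _ ≤ dist (ψ (β g a * b)) (ψ (β g a' * b'))
          + (dist (ψ (β g a' * b')) (ψ a' * ψ b') + dist (ψ a' * ψ b') (ψ a * ψ b)) :=
          add_le_add_right (dist_triangle _ _ _) _
      _ = _ := by rw [dist_eq_norm (ψ (β g a * b)), dist_eq_norm (ψ a' * ψ b')]; ring
  have h12 : (12 : ℝ) * (δ * D) ≤ ε / 2 := by linarith
  calc dist (ψ (β g a * b)) (ψ a * ψ b)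
      ≤ ‖ψ (β g a * b) - ψ (β g a' * b')‖ + dist (ψ (β g a' * b')) (ψ a' * ψ b')
        + ‖ψ a' * ψ b' - ψ a * ψ b‖ := htri
    _ < 4 * (δ * D) + ε / 3 + 8 * (δ * D) := add_lt_add_of_lt_of_le (add_lt_add_of_le_of_lt est1 hg) est3
    _ ≤ ε / 2 + ε / 3 := by linarith [h12]
    _ < ε := by linarith [hε]
end
end
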